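/- Let K be a field, n ≥ 1, and ℓ ∈ ℤ. Working in the Laurent polynomial ring L = K[x_1^{±1},…,x_n^{±1}], the following holds: for every r ≥ 1 and every a = (a_1,…,a_n) ∈ ℤ^n with a_i ≤ −1 for all i, the identity E_r(x^a) = binom((a_1+⋯+a_n+n) − ℓ, r)·x^a holds (binomial taken via its image in K) if and only if ℓ = n. (Since the graded injective hull *E of K[x_1,…,x_n]/(x_1,…,x_n) has K-basis the monomials x^a with all a_i ≤ −1, graded so that x^a has degree a_1+⋯+a_n+n, this expresses that *E(ℓ) is Eulerian if and only if ℓ = n.) -/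

import Mathlib

/-- The divided-power partial derivative `∂_i^{[j]}` on the Laurent polynomial ring
`K[x_1^{±1},…,x_n^{±1}]`, realized as the monoid algebra of `ℤ^n` over `K`; it is determined
on Laurent monomials by `∂_i^{[j]}(x^a) = binom(a_i, j) • x^{a - j·e_i}`, where `binom` is the
generalized (integer) binomial coefficient `Ring.choose`. -/
noncomputable def ldpDeriv (K : Type*) [CommRing K] {n : ℕ} (i : Fin n) (j : ℕ) :
    AddMonoidAlgebra K (Fin n → ℤ) →ₗ[K] AddMonoidAlgebra K (Fin n → ℤ) :=
  Finsupp.lsum K (fun a : Fin n → ℤ =>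
    ((Ring.choose (a i) j : ℤ) : K) •
      (AddMonoidAlgebra.lsingle (a - Pi.single i (j : ℤ)) : K →ₗ[K] AddMonoidAlgebra K (Fin n → ℤ)))
    ∘ₗ (AddMonoidAlgebra.coeffLinearEquiv K).toLinearMap

/-- The `r`-th Euler operator `E_r = Σ_{i_1+⋯+i_n=r} x^{(i_1,…,i_n)} ∂_1^{[i_1]}⋯∂_n^{[i_n]}`
on the Laurent polynomial ring `K[x_1^{±1},…,x_n^{±1}]`. -/
noncomputable def leulerOp (K : Type*) [CommRing K] (n : ℕ) (r : ℕ) :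
    AddMonoidAlgebra K (Fin n → ℤ) →ₗ[K] AddMonoidAlgebra K (Fin n → ℤ) :=
  ∑ c ∈ Finset.Nat.antidiagonalTuple n r,
    LinearMap.mulLeft K (AddMonoidAlgebra.single (fun t => (c t : ℤ)) (1 : K)) ∘ₗ
      ((List.finRange n).map fun i => ldpDeriv K i (c i)).prod

private lemma sumsplit {R : Type*} [CommRing R] (f g : ℕ → R) (k D : ℕ) (hk : k ≤ D)
    (hD : 0 < D) (c : R)
    (hg : ∀ j ≤ k, g j = (if j = 0 then 1 else 0) + (if j = D then c else 0)) (hf0 : f 0 = 1) :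
    ∑ ij ∈ Finset.HasAntidiagonal.antidiagonal k, f ij.1 * g ij.2 = f k + (if k = D then c else 0) := by
  rw [Finset.Nat.sum_antidiagonal_eq_sum_range_succ_mk (fun ij => f ij.1 * g ij.2) k]
  have key : ∀ i ∈ Finset.range (k + 1),
      f i * g (k - i) = (if i = k then f k else 0) + (if k = D ∧ i = 0 then c else 0) := by
    intro i hi
    rw [Finset.mem_range, Nat.lt_succ_iff] at hi
    rw [hg (k - i) (Nat.sub_le k i)]
    rcases eq_or_ne i k with h | h
    · subst h
      have h1 : i - i = 0 := by omega
      have h3 : ¬ (i = D ∧ i = 0) := by rintro ⟨rfl, rfl⟩; omega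
      simp [h1, h3, mul_add, Ne.symm hD.ne']
    · have h1 : ¬ (k - i = 0) := by omega
      have h2 : (k - i = D) ↔ (k = D ∧ i = 0) := by omega
      simp only [if_neg h1, h2, zero_add, mul_ite, mul_zero]
      rcases eq_or_ne i 0 with rfl | h3
      · simp [h, hf0]
      · have : ¬ (k = D ∧ i = 0) := by tauto
        simp [h, this]
  rw [Finset.sum_congr rfl key, Finset.sum_add_distrib,
    Finset.sum_ite_eq' (Finset.range (k+1)) k]
  rcases eq_or_ne k D with rfl | h
  · simp
  · have : ∀ x, ¬ (k = D ∧ x = 0) := fun x hx => h hx.1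
    simp [this, h]
section charp
variable {p : ℕ}
private lemma S0 (hP : p.Prime) (N : ℕ) : ∀ j ≤ p ^ N, ((Nat.choose (p ^ N) j : ℤ) : ZMod p)
    = (if j = 0 then 1 else 0) + (if j = p ^ N then 1 else 0) := by
  intro j hj
  have hpos : 0 < p ^ N := pow_pos hP.pos N
  rcases eq_or_ne j 0 with rfl | h0
  · simp [Ne.symm hpos.ne']
  · rcases eq_or_ne j (p ^ N) with rfl | h1
    · simp [h0, hP.ne_zero]
    · have : ((Nat.choose (p ^ N) j : ℤ) : ZMod p) = 0 := by
        rw [ZMod.intCast_zmod_eq_zero_iff_dvd]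
        exact_mod_cast Int.natCast_dvd_natCast.mpr (Nat.Prime.dvd_choose_pow hP h0 h1)
      rw [this, if_neg h0, if_neg h1, add_zero]
private lemma STEP (hP : p.Prime) (N : ℕ) (x : ℤ) {k : ℕ} (hk : k ≤ p ^ N) :
    ((Ring.choose (x + (p : ℤ) ^ N) k : ℤ) : ZMod p)
      = ((Ring.choose x k : ℤ) : ZMod p) + (if k = p ^ N then 1 else 0) := by
  rw [Ring.add_choose_eq k (Commute.all _ _)]
  push_cast
  have hg : ∀ j ≤ k, ((Ring.choose ((p : ℤ) ^ N) j : ℤ) : ZMod p)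
      = (if j = 0 then 1 else 0) + (if j = p ^ N then 1 else 0) := by
    intro j hj
    have h1 : ((p : ℤ) ^ N) = ((p ^ N : ℕ) : ℤ) := by push_cast; ring
    rw [h1, Ring.choose_natCast]
    exact S0 hP N j (hj.trans hk)
  exact sumsplit (fun j => ((Ring.choose x j : ℤ) : ZMod p))
      (fun j => ((Ring.choose ((p : ℤ) ^ N) j : ℤ) : ZMod p)) k (p ^ N) hk
      (pow_pos hP.pos N) 1 hg (by simp [Ring.choose_zero_right])
private lemma CHARP (hP : p.Prime) (N : ℕ) (m : ℤ) :
    ∀ k ≤ p ^ N, ((Ring.choose ((p : ℤ) ^ N * m) k : ℤ) : ZMod p)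
    = (if k = 0 then 1 else 0) + (if k = p ^ N then (m : ZMod p) else 0) := by
  induction m using Int.induction_on with
  | zero => intro k hk; simp [Ring.choose_zero_ite]
  | succ m ih =>
    intro k hk
    have h1 : (p : ℤ) ^ N * ((m : ℤ) + 1) = (p : ℤ) ^ N * (m : ℤ) + (p : ℤ) ^ N := by ring
    have hpos : 0 < p ^ N := pow_pos hP.pos N
    rw [h1, STEP hP N _ hk, ih k hk]
    rcases eq_or_ne k (p ^ N) with rfl | h
    · simp only [if_pos rfl, if_neg hpos.ne']
      push_cast
      simp
    · simp only [if_neg h, add_zero]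
  | pred m ih =>
    intro k hk
    have hpos : 0 < p ^ N := pow_pos hP.pos N
    have key := STEP hP N ((p : ℤ) ^ N * (-(m : ℤ) - 1)) hk
    have h1 : (p : ℤ) ^ N * (-(m : ℤ) - 1) + (p : ℤ) ^ N = (p : ℤ) ^ N * (-(m : ℤ)) := by ring
    rw [h1, ih k hk] at key
    rcases eq_or_ne k (p ^ N) with rfl | h
    · simp only [if_pos rfl, if_neg hpos.ne'] at key ⊢
      push_cast at key ⊢
      linear_combination -key
    · simp only [if_neg h, add_zero] at key ⊢
      linear_combination -key
private lemma MAIN (hP : p.Prime) (N : ℕ) (x m : ℤ) :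
    ((Ring.choose (x + (p : ℤ) ^ N * m) (p ^ N) : ℤ) : ZMod p)
      = ((Ring.choose x (p ^ N) : ℤ) : ZMod p) + (m : ZMod p) := by
  rw [Ring.add_choose_eq _ (Commute.all _ _)]
  push_cast
  have := sumsplit (fun j => ((Ring.choose x j : ℤ) : ZMod p))
      (fun j => ((Ring.choose ((p : ℤ) ^ N * m) j : ℤ) : ZMod p)) (p ^ N) (p ^ N) le_rfl
      (pow_pos hP.pos N) (m : ZMod p) (fun j hj => CHARP hP N m j hj)
      (by simp [Ring.choose_zero_right])
  simpa using this
end charp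
private lemma eval_list_sum {n : ℕ} (l : List (Fin n)) (g : Fin n → (Fin n → ℤ)) (t : Fin n) :
    (l.map g).sum t = (l.map fun i => g i t).sum := by
  induction l with
  | nil => rfl
  | cons i l ih => simp [ih]
private lemma ldpDeriv_single {K : Type*} [CommRing K] {n : ℕ} (i : Fin n) (j : ℕ)
    (a : Fin n → ℤ) (b : K) :
    ldpDeriv K i j (AddMonoidAlgebra.single a b) =
      AddMonoidAlgebra.single (a - Pi.single i (j : ℤ)) (((Ring.choose (a i) j : ℤ) : K) * b) := by
  rw [ldpDeriv, LinearMap.comp_apply, LinearEquiv.coe_coe]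
  erw [Finsupp.lsum_single]
  rw [LinearMap.smul_apply, AddMonoidAlgebra.lsingle_apply, AddMonoidAlgebra.smul_single']
private lemma prodDeriv {K : Type*} [CommRing K] {n : ℕ} (c : Fin n → ℕ) (a : Fin n → ℤ) :
    ∀ l : List (Fin n), l.Nodup →
      (((l.map fun i => ldpDeriv K i (c i)).prod) (AddMonoidAlgebra.single a (1 : K))) =
        AddMonoidAlgebra.single (a - (l.map fun i => Pi.single i (c i : ℤ)).sum)
          ((l.map fun i => ((Ring.choose (a i) (c i) : ℤ) : K)).prod) := by
  intro l
  induction l with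
  | nil => intro _; simp
  | cons i l ih =>
    intro hnd
    have hi : i ∉ l := (List.nodup_cons.mp hnd).1
    have hnd' : l.Nodup := (List.nodup_cons.mp hnd).2
    rw [List.map_cons, List.prod_cons, Module.End.mul_apply, ih hnd', ldpDeriv_single]
    have hzero : (l.map fun t => Pi.single t (c t : ℤ)).sum i = 0 := by
      rw [eval_list_sum]
      apply List.sum_eq_zero
      intro x hx
      obtain ⟨t, ht, rfl⟩ := List.mem_map.mp hx
      refine Pi.single_eq_of_ne ?_ _
      rintro rfl
      exact hi ht
    have ha : (a - (l.map fun t => Pi.single t (c t : ℤ)).sum) i = a i := by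
      simp [hzero]
    rw [ha]
    congr 1
    rw [List.map_cons, List.sum_cons, sub_sub,
      add_comm (Pi.single i ((c i : ℤ))) ((l.map fun t => Pi.single t (c t : ℤ)).sum)]
private lemma vand {n : ℕ} (a : Fin n → ℤ) (s : Finset (Fin n)) :
    ∀ r : ℕ, ∑ c ∈ s.piAntidiag r, ∏ i ∈ s, Ring.choose (a i) (c i)
      = Ring.choose (∑ i ∈ s, a i) r := by
  induction s using Finset.cons_induction with
  | empty =>
    intro r
    rw [Finset.piAntidiag_empty, Finset.sum_empty, Ring.choose_zero_ite]
    rcases eq_or_ne r 0 with rfl | h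
    · simp
    · simp [h]
  | cons i s hi ih =>
    intro r
    rw [Finset.piAntidiag_cons hi, Finset.sum_disjiUnion]
    have step : ∀ p ∈ Finset.HasAntidiagonal.antidiagonal r,
        (∑ c ∈ Finset.map (addRightEmbedding fun t => if t = i then p.1 else 0) (s.piAntidiag p.2),
          ∏ t ∈ Finset.cons i s hi, Ring.choose (a t) (c t))
        = Ring.choose (a i) p.1 * Ring.choose (∑ t ∈ s, a t) p.2 := by
      intro p _
      rw [Finset.sum_map, ← ih p.2, Finset.mul_sum]
      apply Finset.sum_congr rfl
      intro c hc
      rw [Finset.prod_cons]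
      have hci : c i = 0 := by
        by_contra h
        exact hi ((Finset.mem_piAntidiag.mp hc).2 i h)
      have h1 : (addRightEmbedding fun t => if t = i then p.1 else 0) c i = p.1 := by
        simp [addRightEmbedding, hci]
      rw [h1]
      congr 1
      apply Finset.prod_congr rfl
      intro t ht
      have : (addRightEmbedding fun t => if t = i then p.1 else 0) c t = c t := by
        have : t ≠ i := fun h => hi (h ▸ ht)
        simp [addRightEmbedding, this]
      rw [this]
    rw [Finset.sum_congr rfl step, Finset.sum_cons,
      Ring.add_choose_eq r (Commute.all _ _)]
private lemma leulerOp_single {K : Type*} [CommRing K] (n r : ℕ) (a : Fin n → ℤ) :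
    leulerOp K n r (AddMonoidAlgebra.single a (1 : K)) =
      ((Ring.choose (∑ i, a i) r : ℤ) : K) • AddMonoidAlgebra.single a (1 : K) := by
  rw [leulerOp, LinearMap.sum_apply]
  have hsum : ∀ c : Fin n → ℕ,
      ((List.finRange n).map fun i => Pi.single i (c i : ℤ)).sum = fun t => (c t : ℤ) := by
    intro c
    funext t
    rw [eval_list_sum, ← Fin.sum_univ_def]
    simp [Pi.single_apply]
  have step : ∀ c ∈ Finset.Nat.antidiagonalTuple n r,
      (LinearMap.mulLeft K (AddMonoidAlgebra.single (fun t => ((c t : ℤ))) (1 : K)) ∘ₗ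
        ((List.finRange n).map fun i => ldpDeriv K i (c i)).prod)
          (AddMonoidAlgebra.single a (1 : K))
      = ((∏ i, ((Ring.choose (a i) (c i) : ℤ) : K))) • AddMonoidAlgebra.single a (1 : K) := by
    intro c _
    rw [LinearMap.comp_apply]
    erw [prodDeriv c a (List.finRange n) (List.nodup_finRange n)]
    rw [hsum c, LinearMap.mulLeft_apply, ← Fin.prod_univ_def]
    erw [AddMonoidAlgebra.single_mul_single]
    rw [one_mul, add_sub_cancel]
    rw [AddMonoidAlgebra.smul_single', mul_one]
  rw [Finset.sum_congr rfl step, ← Finset.sum_smul]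
  congr 1
  rw [← Finset.piAntidiag_univ_fin_eq_antidiagonalTuple r n, ← vand a Finset.univ r]
  push_cast
  rfl
private lemma exists_pow_mul {p : ℕ} (hP : p.Prime) {d : ℤ} (hd : d ≠ 0) :
    ∃ (N : ℕ) (u : ℤ), d = (p : ℤ) ^ N * u ∧ ¬ (p : ℤ) ∣ u := by
  set m : ℕ := d.natAbs with hmdef
  have hm0 : m ≠ 0 := Int.natAbs_ne_zero.mpr hd
  refine ⟨m.factorization p, d.sign * (m / p ^ (m.factorization p) : ℕ), ?_, ?_⟩
  · have hmm : p ^ (m.factorization p) * (m / p ^ (m.factorization p)) = m :=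
      Nat.ordProj_mul_ordCompl_eq_self m p
    have : ((p : ℤ) ^ (m.factorization p)) * (d.sign * ((m / p ^ (m.factorization p) : ℕ) : ℤ))
        = d.sign * (((p ^ (m.factorization p) * (m / p ^ (m.factorization p)) : ℕ)) : ℤ) := by
      push_cast; ring
    rw [this, hmm, Int.sign_mul_natAbs]
  · intro hdvd
    apply Nat.not_dvd_ordCompl hP hm0
    have h2 : (d.sign * ((m / p ^ (m.factorization p) : ℕ) : ℤ)).natAbs
        = m / p ^ (m.factorization p) := by
      rw [Int.natAbs_mul, Int.natAbs_sign_of_ne_zero hd, one_mul, Int.natAbs_natCast]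
    have := Int.natAbs_dvd_natAbs.mpr hdvd
    rw [h2] at this
    simpa using this

/-- Let `K` be a field, `n ≥ 1`, and `ℓ ∈ ℤ`.  In the Laurent polynomial
ring `K[x_1^{±1},…,x_n^{±1}]`, the following holds: every `r ≥ 1` and every Laurent monomial
`x^a` with all `a_i ≤ −1` satisfy `E_r(x^a) = binom((a_1+⋯+a_n+n) − ℓ, r) • x^a` (generalized
integer binomial coefficient taken via its image in `K`) if and only if `ℓ = n`.  Since the
graded injective hull `*E` of `K[x_1,…,x_n]/(x_1,…,x_n)` has `K`-basis the monomials `x^a`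
with all `a_i ≤ −1`, graded so that `x^a` has degree `a_1+⋯+a_n+n`, this expresses that
`*E(ℓ)` is Eulerian if and only if `ℓ = n`. -/
theorem shifted_E_eulerian_iff (K : Type*) [Field K] (n : ℕ) (hn : 1 ≤ n) (ℓ : ℤ) :
    (∀ r : ℕ, 1 ≤ r → ∀ a : Fin n → ℤ, (∀ i, a i ≤ -1) →
        leulerOp K n r (AddMonoidAlgebra.single a (1 : K)) =
          ((Ring.choose ((∑ i, a i) + n - ℓ) r : ℤ) : K) •
            AddMonoidAlgebra.single a (1 : K)) ↔ ℓ = n := by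
  constructor
  · intro H
    have key : ∀ r : ℕ, 1 ≤ r →
        ((Ring.choose (-(n : ℤ)) r : ℤ) : K) = ((Ring.choose (-ℓ) r : ℤ) : K) := by
      intro r hr
      have h := H r hr (fun _ => -1) (fun _ => le_refl _)
      rw [leulerOp_single] at h
      have hs : (∑ _i : Fin n, (-1 : ℤ)) = -(n : ℤ) := by simp
      rw [hs] at h
      have hs2 : (-(n : ℤ) + n - ℓ) = -ℓ := by ring
      rw [hs2] at h
      have := congrArg (fun f : AddMonoidAlgebra K (Fin n → ℤ) => f.coeff (fun _ => (-1 : ℤ))) h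
      simpa using this
    haveI : CharP K (ringChar K) := ringChar.charP K
    rcases CharP.char_is_prime_or_zero K (ringChar K) with hP | h0
    · -- characteristic p
      by_contra hne
      have hd : ((n : ℤ) - ℓ) ≠ 0 := sub_ne_zero.mpr fun h => hne (by omega)
      obtain ⟨N, u, hu, hnd⟩ := exists_pow_mul hP hd
      have hr : 1 ≤ ringChar K ^ N := Nat.one_le_iff_ne_zero.mpr (pow_ne_zero N hP.pos.ne')
      have hkey := key (ringChar K ^ N) hr
      have hmain := MAIN hP N (-(n : ℤ)) u
      have hcast : ∀ z : ℤ,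
          (ZMod.castHom (dvd_refl (ringChar K)) K) ((z : ZMod (ringChar K))) = (z : K) :=
        fun z => map_intCast _ z
      have hmainK : ((Ring.choose (-(n : ℤ) + (ringChar K : ℤ) ^ N * u) (ringChar K ^ N) : ℤ) : K)
          = ((Ring.choose (-(n : ℤ)) (ringChar K ^ N) : ℤ) : K) + (u : K) := by
        have h2 := congrArg (ZMod.castHom (dvd_refl (ringChar K)) K) hmain
        rw [map_add, hcast, hcast, hcast] at h2
        exact h2
      have hsub : -(n : ℤ) + (ringChar K : ℤ) ^ N * u = -ℓ := by rw [← hu]; ring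
      rw [hsub, ← hkey, left_eq_add] at hmainK
      exact hnd ((CharP.intCast_eq_zero_iff K (ringChar K) u).mp hmainK)
    · -- characteristic zero
      haveI : CharP K 0 := h0 ▸ (ringChar.charP K)
      haveI : CharZero K := CharP.charP_to_charZero K
      have h1 := key 1 le_rfl
      rw [Ring.choose_one_right, Ring.choose_one_right] at h1
      have := Int.cast_injective (α := K) h1
      omega
  · rintro rfl
    intro r hr a ha
    rw [leulerOp_single]
    congr 3
    ring
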